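/- Let U and V be m-dimensional linear subspaces of ℝⁿ with orthonormal bases (e₁,…,e_m) of U and (f₁,…,f_m) of V such that |e_i − f_i| ≤ ϑ for every i = 1,…,m. Then d_G(U,V) ≤ 2·m·ϑ. -/

import Mathlib

open Metric MeasureTheory Filter
open scoped RealInnerProductSpace ENNReal NNReal

noncomputable section

abbrev Euc (n : ℕ) := EuclideanSpace ℝ (Fin n)

variable {n : ℕ}

/-- Orthogonal projection onto a subspace, as a continuous linear map on the whole space. -/
noncomputable def projCLM (U : Submodule ℝ (Euc n)) : Euc n →L[ℝ] Euc n :=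
  U.subtypeL.comp (U.orthogonalProjection)

/-- Orthogonal projection onto the orthogonal complement. -/
noncomputable def QCLM (U : Submodule ℝ (Euc n)) : Euc n →L[ℝ] Euc n :=
  projCLM Uᗮ

/-- The metric on the Grassmannian: operator norm distance of orthogonal projections. -/
noncomputable def dG (U V : Submodule ℝ (Euc n)) : ℝ :=
  ‖projCLM U - projCLM V‖

/-- The cone with axis `Hᗮ` and "angle" `δ`. -/
def angCone (δ : ℝ) (H : Submodule ℝ (Euc n)) : Set (Euc n) :=
  {x | δ * ‖x‖ ≤ ‖QCLM H x‖}

/-- The shell (n-annulus) of radii `r` and `R`. -/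
def shell (r R : ℝ) : Set (Euc n) :=
  Metric.ball (0 : Euc n) R \ Metric.closedBall (0 : Euc n) r

/-- Conical cap: intersection of a cone and a shell. -/
def conicalCap (δ : ℝ) (H : Submodule ℝ (Euc n)) (r R : ℝ) : Set (Euc n) :=
  angCone δ H ∩ shell r R

/-- Symmetrized Hausdorff-type distance: sum of the two one-sided deviations. -/
noncomputable def hDistSum (A B : Set (Euc n)) : ℝ :=
  (⨆ y : A, Metric.infDist (y : Euc n) B) + (⨆ y : B, Metric.infDist (y : Euc n) A)

/-- Jones β-number (closed-ball version). -/
noncomputable def betaBar (m : ℕ) (S : Set (Euc n)) (x : Euc n) (r : ℝ) : ℝ :=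
  (1/r) * ⨅ H : {H : Submodule ℝ (Euc n) // Module.finrank ℝ H = m},
    ⨆ z : ↥(S ∩ Metric.closedBall x r), ‖QCLM H.1 ((z : Euc n) - x)‖

/-- Jones β-number (open-ball version). -/
noncomputable def betaOpen (m : ℕ) (S : Set (Euc n)) (x : Euc n) (r : ℝ) : ℝ :=
  (1/r) * ⨅ H : {H : Submodule ℝ (Euc n) // Module.finrank ℝ H = m},
    ⨆ z : ↥(S ∩ Metric.ball x r), ‖QCLM H.1 ((z : Euc n) - x)‖

/-- Reifenberg θ-number (closed-ball version). -/
noncomputable def thetaBar (m : ℕ) (S : Set (Euc n)) (x : Euc n) (r : ℝ) : ℝ :=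
  (1/r) * ⨅ H : {H : Submodule ℝ (Euc n) // Module.finrank ℝ H = m},
    hDistSum (S ∩ Metric.closedBall x r)
      ((fun v => x + v) '' (H.1 : Set (Euc n)) ∩ Metric.closedBall x r)

/-- Reifenberg θ-number (open-ball version). -/
noncomputable def thetaOpen (m : ℕ) (S : Set (Euc n)) (x : Euc n) (r : ℝ) : ℝ :=
  (1/r) * ⨅ H : {H : Submodule ℝ (Euc n) // Module.finrank ℝ H = m},
    hDistSum (S ∩ Metric.ball x r)
      ((fun v => x + v) '' (H.1 : Set (Euc n)) ∩ Metric.ball x r)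

/-- Discrete Menger-type curvature of an `(m+2)`-tuple of points. -/
noncomputable def discCurv (m : ℕ) (x : Fin (m+2) → Euc n) : ℝ :=
  (μH[((m : ℝ) + 1)] (convexHull ℝ (Set.range x))).toReal / Metric.diam (Set.range x) ^ (m+2)

/-- Iterated lower integral over `k` copies of a measure. -/
noncomputable def multiLIntegral (μ : Measure (Euc n)) :
    (k : ℕ) → ((Fin k → Euc n) → ℝ≥0∞) → ℝ≥0∞
  | 0, f => f Fin.elim0
  | k+1, f => ∫⁻ x, multiLIntegral μ k (fun v => f (Fin.cons x v)) ∂μ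

/-- The `p`-energy of a set: the integral of `K^p` over `(m+2)`-tuples of points of `S`,
with respect to the `m`-dimensional Hausdorff measure restricted to `S`. -/
noncomputable def energy (m : ℕ) (p : ℝ) (S : Set (Euc n)) : ℝ≥0∞ :=
  multiLIntegral ((μH[(m : ℝ)]).restrict S) (m+2) fun x => ENNReal.ofReal (discCurv m x ^ p)

/-- The class `V_k(η,d)` of `(η,d)`-voluminous `(k+1)`-simplices. -/
def IsVol (k : ℕ) (η d : ℝ) (x : Fin (k+2) → Euc n) : Prop :=
  (∃ c : Euc n, convexHull ℝ (Set.range x) ⊆ Metric.closedBall c d) ∧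
  ENNReal.ofReal ((η * d) ^ k) ≤
    μH[(k : ℝ)] (convexHull ℝ (Set.range fun i : Fin (k+1) => x i.castSucc)) ∧
  η * d ≤ Metric.infDist (x (Fin.last (k+1)))
    (affineSpan ℝ (Set.range fun i : Fin (k+1) => x i.castSucc) : Set (Euc n))

/-- Pseudo-distance between two simplices given by vertex tuples. -/
noncomputable def simplexDist (k : ℕ) (x y : Fin (k+2) → Euc n) : ℝ :=
  ⨅ σ : Equiv.Perm (Fin (k+2)), ⨆ i, dist (x i) (y (σ i))

/-- Best approximating `m`-planes for `S` in the closed ball `B̄(x,r)`. -/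
def BAP (m : ℕ) (S : Set (Euc n)) (x : Euc n) (r : ℝ) : Set (Submodule ℝ (Euc n)) :=
  {H | Module.finrank ℝ H = m ∧
    hDistSum (S ∩ Metric.closedBall x r)
      ((fun v => x + v) '' (H : Set (Euc n)) ∩ Metric.closedBall x r) ≤ r * thetaBar m S x r}

/-- `m`-fine sets with constants `A`, `R`, `M`. -/
def IsFine (m : ℕ) (S : Set (Euc n)) (A R M : ℝ) : Prop :=
  IsCompact S ∧ 0 < A ∧ 0 < R ∧ 2 ≤ M ∧
  (∀ x ∈ S, ∀ r : ℝ, 0 < r → r ≤ R →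
    ENNReal.ofReal (A * r ^ m) ≤ μH[(m : ℝ)] (S ∩ Metric.ball x r)) ∧
  (∀ x ∈ S, ∀ r : ℝ, 0 < r → r ≤ R → thetaBar m S x r ≤ M * betaBar m S x r)

/-- `T` is the (m-dimensional) tangent plane of `S` at `x`: the limit in the Grassmannian
metric of best approximating planes as the scale tends to `0`. -/
def IsTangentAt (m : ℕ) (S : Set (Euc n)) (x : Euc n) (T : Submodule ℝ (Euc n)) : Prop :=
  Module.finrank ℝ T = m ∧
  ∀ ε > 0, ∃ r₀ > 0, ∀ r : ℝ, 0 < r → r ≤ r₀ → ∀ H ∈ BAP m S x r, dG T H ≤ ε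

lemma projCLM_eq_sum {m : ℕ} (v : Fin m → Euc n) (hv : Orthonormal ℝ v)
    (U : Submodule ℝ (Euc n)) (hvU : Submodule.span ℝ (Set.range v) = U) (x : Euc n) :
    projCLM U x = ∑ i, ⟪v i, x⟫ • v i := by
  have hvi := orthonormal_iff_ite.mp hv
  have hmem : ∀ i, v i ∈ U := fun i => hvU ▸ Submodule.subset_span (Set.mem_range_self i)
  have hy : (∑ i, ⟪v i, x⟫ • v i) ∈ U := Submodule.sum_mem _ fun i _ =>
    Submodule.smul_mem _ _ (hmem i)
  have key : ∀ z ∈ U, ⟪x - ∑ i, ⟪v i, x⟫ • v i, z⟫ = 0 := by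
    intro z hz
    rw [← hvU] at hz
    induction hz using Submodule.span_induction with
    | mem z hz =>
      obtain ⟨j, rfl⟩ := hz
      rw [inner_sub_left, sum_inner]
      have : ∀ i, ⟪⟪v i, x⟫ • v i, v j⟫ = if i = j then ⟪v j, x⟫ else 0 := by
        intro i
        rw [real_inner_smul_left, hvi i j]
        rcases eq_or_ne i j with rfl | hij
        · simp
        · simp [hij]
      simp only [this, Finset.sum_ite_eq', Finset.mem_univ, if_true]
      rw [real_inner_comm]
      ring
    | zero => simp
    | add a b _ _ ha hb => rw [inner_add_right, ha, hb, add_zero]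
    | smul c a _ ha => rw [real_inner_smul_right, ha, mul_zero]
  have := Submodule.eq_starProjection_of_mem_of_inner_eq_zero (K := U) hy key
  exact this

/-- If `U`, `V` are `m`-dimensional subspaces of `ℝⁿ` with orthonormal bases
`e`, `f` satisfying `‖e i − f i‖ ≤ ϑ`, then `d_G(U,V) ≤ 2·m·ϑ`. -/
theorem statement0 (m : ℕ) (hm : 0 < m) (n : ℕ) (hmn : m < n)
    (U V : Submodule ℝ (Euc n))
    (hU : Module.finrank ℝ U = m) (hV : Module.finrank ℝ V = m)
    (e f : Fin m → Euc n)
    (he : Orthonormal ℝ e) (hf : Orthonormal ℝ f)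
    (heU : Submodule.span ℝ (Set.range e) = U)
    (hfV : Submodule.span ℝ (Set.range f) = V)
    (ϑ : ℝ) (hϑ : ∀ i, ‖e i - f i‖ ≤ ϑ) :
    dG U V ≤ 2 * m * ϑ := by
  have hϑ0 : 0 ≤ ϑ := le_trans (norm_nonneg _) (hϑ ⟨0, hm⟩)
  have h2 : 0 ≤ 2 * (m : ℝ) * ϑ := by positivity
  refine ContinuousLinearMap.opNorm_le_bound _ h2 fun x => ?_
  rw [ContinuousLinearMap.sub_apply, projCLM_eq_sum e he U heU x,
    projCLM_eq_sum f hf V hfV x, ← Finset.sum_sub_distrib]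
  calc ‖∑ i, (⟪e i, x⟫ • e i - ⟪f i, x⟫ • f i)‖
      ≤ ∑ i, ‖⟪e i, x⟫ • e i - ⟪f i, x⟫ • f i‖ := norm_sum_le _ _
    _ ≤ ∑ _i : Fin m, 2 * ϑ * ‖x‖ := by
        refine Finset.sum_le_sum fun i _ => ?_
        have hei : ‖e i‖ = 1 := he.1 i
        have hfi : ‖f i‖ = 1 := hf.1 i
        have hsplit : ⟪e i, x⟫ • e i - ⟪f i, x⟫ • f i
            = ⟪e i, x⟫ • (e i - f i) + ⟪e i - f i, x⟫ • f i := by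
          rw [smul_sub, inner_sub_left, sub_smul]; abel
        rw [hsplit]
        calc ‖⟪e i, x⟫ • (e i - f i) + ⟪e i - f i, x⟫ • f i‖
            ≤ ‖⟪e i, x⟫ • (e i - f i)‖ + ‖⟪e i - f i, x⟫ • f i‖ := norm_add_le _ _
          _ = |⟪e i, x⟫| * ‖e i - f i‖ + |⟪e i - f i, x⟫| * ‖f i‖ := by
              rw [norm_smul, norm_smul, Real.norm_eq_abs, Real.norm_eq_abs]
          _ ≤ (‖e i‖ * ‖x‖) * ϑ + (‖e i - f i‖ * ‖x‖) * 1 := by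
              gcongr
              · exact abs_real_inner_le_norm _ _
              · exact hϑ i
              · exact abs_real_inner_le_norm _ _
              · exact hfi.le
          _ ≤ 1 * ‖x‖ * ϑ + ϑ * ‖x‖ * 1 := by
              gcongr
              · exact hei.le
              · exact hϑ i
          _ = 2 * ϑ * ‖x‖ := by ring
    _ = 2 * m * ϑ * ‖x‖ := by
        rw [Finset.sum_const, Finset.card_univ, Fintype.card_fin, nsmul_eq_mul]; ring
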